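/- arXiv:2602.02042 — 5 statements merged into one kernel-verified Lean document; each statement's English description precedes it below -/
import Mathlib

section
/- Let K be a field of characteristic p > 0 and f = xᵖ + y^(p−1) ∈ K[[x,y]]. Then the Milnor number μ(f) = dim_K K[[x,y]]/⟨∂f/∂x, ∂f/∂y⟩ is infinite, while the Tjurina number τ(f) = dim_K K[[x,y]]/⟨f, ∂f/∂x, ∂f/∂y⟩ equals p·(p−2). -/
open MvPowerSeries

/-- Formal partial derivative `∂f/∂xᵢ` of a multivariate formal power series. -/
noncomputable def pderiv {n : ℕ} {K : Type*} [Field K] (i : Fin n)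
    (f : MvPowerSeries (Fin n) K) : MvPowerSeries (Fin n) K :=
  fun d => ((d i : K) + 1) * coeff (d + Finsupp.single i 1) f

/-- The Jacobian ideal `j(f) = ⟨∂f/∂x₁, …, ∂f/∂xₙ⟩`. -/
noncomputable def jIdeal {n : ℕ} {K : Type*} [Field K]
    (f : MvPowerSeries (Fin n) K) : Ideal (MvPowerSeries (Fin n) K) :=
  Ideal.span (Set.range fun i => pderiv i f)

/-- The Tjurina ideal `tj(f) = ⟨f, ∂f/∂x₁, …, ∂f/∂xₙ⟩`. -/
noncomputable def tjIdeal {n : ℕ} {K : Type*} [Field K]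
    (f : MvPowerSeries (Fin n) K) : Ideal (MvPowerSeries (Fin n) K) :=
  Ideal.span (insert f (Set.range fun i => pderiv i f))

/-- The maximal ideal `⟨x₁, …, xₙ⟩` of `K[[x₁,…,xₙ]]`. -/
noncomputable def mIdeal (n : ℕ) (K : Type*) [Field K] : Ideal (MvPowerSeries (Fin n) K) :=
  Ideal.span (Set.range (X : Fin n → MvPowerSeries (Fin n) K))

section Aux

variable {K : Type*} [Field K]

/-! ### Computation of the partial derivatives of `f = x^p + y^(p-1)` -/

lemma aux_pderiv0 (p : ℕ) [CharP K p] (h3 : 3 ≤ p) (f : MvPowerSeries (Fin 2) K)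
    (hf : f = X 0 ^ p + X 1 ^ (p - 1)) :
    pderiv 0 f = 0 := by
  funext d
  show ((d 0 : K) + 1) * coeff (d + Finsupp.single 0 1) f = 0
  rw [hf, map_add, coeff_X_pow, coeff_X_pow]
  by_cases h1 : d = Finsupp.single 0 (p - 1)
  · have hd : d + Finsupp.single (0 : Fin 2) 1 = Finsupp.single 0 p := by
      rw [h1, ← Finsupp.single_add]
      congr 1
      omega
    have hd2 : d + Finsupp.single (0:Fin 2) 1 ≠ Finsupp.single 1 (p-1) := by
      intro h
      have := congrArg (fun g : Fin 2 →₀ ℕ => g 0) h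
      simp at this
    rw [if_pos hd, if_neg hd2, h1]
    have : ((p - 1 : ℕ) : K) + 1 = (p : K) := by
      have : ((p - 1 : ℕ) : K) = (p : K) - 1 := by
        rw [Nat.cast_sub (by omega)]; simp
      rw [this]; ring
    simp [this, CharP.cast_eq_zero K p]
  · have hd : d + Finsupp.single (0:Fin 2) 1 ≠ Finsupp.single 0 p := by
      intro h
      apply h1
      have : d + Finsupp.single (0:Fin 2) 1 = Finsupp.single 0 (p-1) + Finsupp.single 0 1 := by
        rw [← Finsupp.single_add, h]; congr 1; omega
      exact add_right_cancel this
    have hd2 : d + Finsupp.single (0:Fin 2) 1 ≠ Finsupp.single 1 (p-1) := by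
      intro h
      have := congrArg (fun g : Fin 2 →₀ ℕ => g 0) h
      simp at this
    rw [if_neg hd, if_neg hd2]
    ring

lemma aux_pderiv1 (p : ℕ) [CharP K p] (h3 : 3 ≤ p) (f : MvPowerSeries (Fin 2) K)
    (hf : f = X 0 ^ p + X 1 ^ (p - 1)) :
    pderiv 1 f = -(X 1 ^ (p - 2)) := by
  funext d
  show ((d 1 : K) + 1) * coeff (d + Finsupp.single 1 1) f = coeff d (-(X 1 ^ (p-2)))
  rw [map_neg, coeff_X_pow, hf, map_add, coeff_X_pow, coeff_X_pow]
  have hd2 : d + Finsupp.single (1:Fin 2) 1 ≠ Finsupp.single 0 p := by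
    intro h
    have := congrArg (fun g : Fin 2 →₀ ℕ => g 1) h
    simp at this
  by_cases h1 : d = Finsupp.single 1 (p - 2)
  · have hd : d + Finsupp.single (1 : Fin 2) 1 = Finsupp.single 1 (p-1) := by
      rw [h1, ← Finsupp.single_add]
      congr 1
      omega
    rw [if_pos hd, if_neg hd2, if_pos h1, h1]
    have : ((p - 2 : ℕ) : K) + 1 = -1 := by
      have h1 : ((p - 2 : ℕ) : K) = (p : K) - 2 := by
        rw [Nat.cast_sub (by omega)]; simp
      rw [h1, CharP.cast_eq_zero K p]; ring
    simp [this]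
  · have hd : d + Finsupp.single (1:Fin 2) 1 ≠ Finsupp.single 1 (p-1) := by
      intro h
      apply h1
      have : d + Finsupp.single (1:Fin 2) 1 = Finsupp.single 1 (p-2) + Finsupp.single 1 1 := by
        rw [← Finsupp.single_add, h]; congr 1; omega
      exact add_right_cancel this
    rw [if_neg hd, if_neg hd2, if_neg h1]
    ring

/-! ### Identification of the Jacobian and Tjurina ideals -/

lemma aux_jIdeal_eq (p : ℕ) [CharP K p] (h3 : 3 ≤ p) (f : MvPowerSeries (Fin 2) K)
    (hf : f = X 0 ^ p + X 1 ^ (p - 1)) :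
    jIdeal f = Ideal.span {(X 1 ^ (p - 2) : MvPowerSeries (Fin 2) K)} := by
  apply le_antisymm
  · rw [jIdeal, Ideal.span_le]
    rintro _ ⟨i, rfl⟩
    fin_cases i
    · show pderiv 0 f ∈ _
      rw [aux_pderiv0 p h3 f hf]; exact Ideal.zero_mem _
    · show pderiv 1 f ∈ _
      rw [aux_pderiv1 p h3 f hf]
      exact neg_mem (Ideal.subset_span rfl)
  · rw [Ideal.span_le, Set.singleton_subset_iff]
    have : (X 1 ^ (p-2) : MvPowerSeries (Fin 2) K) = -(pderiv 1 f) := by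
      rw [aux_pderiv1 p h3 f hf, neg_neg]
    rw [this]
    exact neg_mem (Ideal.subset_span ⟨1, rfl⟩)

lemma aux_tjIdeal_eq (p : ℕ) [CharP K p] (h3 : 3 ≤ p) (f : MvPowerSeries (Fin 2) K)
    (hf : f = X 0 ^ p + X 1 ^ (p - 1)) :
    tjIdeal f = Ideal.span {(X 0 ^ p : MvPowerSeries (Fin 2) K), X 1 ^ (p - 2)} := by
  have hy : (X 1 ^ (p - 1) : MvPowerSeries (Fin 2) K) = X 1 * X 1 ^ (p - 2) := by
    rw [← pow_succ']
    congr 1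
    omega
  apply le_antisymm
  · rw [tjIdeal, Ideal.span_le]
    rintro x hx
    rcases hx with rfl | ⟨i, rfl⟩
    · rw [hf, hy]
      exact add_mem (Ideal.subset_span (by simp))
        (Ideal.mul_mem_left _ _ (Ideal.subset_span (by simp)))
    · fin_cases i
      · show pderiv 0 f ∈ _
        rw [aux_pderiv0 p h3 f hf]; exact Ideal.zero_mem _
      · show pderiv 1 f ∈ _
        rw [aux_pderiv1 p h3 f hf]
        exact neg_mem (Ideal.subset_span (by simp))
  · rw [Ideal.span_le]
    have hyq : (X 1 ^ (p-2) : MvPowerSeries (Fin 2) K) ∈ tjIdeal f := by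
      have : (X 1 ^ (p-2) : MvPowerSeries (Fin 2) K) = -(pderiv 1 f) := by
        rw [aux_pderiv1 p h3 f hf, neg_neg]
      rw [this]
      exact neg_mem (Ideal.subset_span (Set.mem_insert_iff.2 (Or.inr ⟨1, rfl⟩)))
    rintro x hx
    rcases hx with rfl | rfl
    · have : (X 0 ^ p : MvPowerSeries (Fin 2) K) = f - X 1 * X 1 ^ (p - 2) := by
        rw [hf, hy]; ring
      rw [this]
      exact sub_mem (Ideal.subset_span (Set.mem_insert _ _)) (Ideal.mul_mem_left _ _ hyq)
    · exact hyq

/-! ### Coefficient description of the monomial ideals -/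

lemma aux_coeff_span_pair (p q : ℕ) (g : MvPowerSeries (Fin 2) K)
    (hg : g ∈ Ideal.span {(X 0 ^ p : MvPowerSeries (Fin 2) K), X 1 ^ q})
    (i j : ℕ) (hi : i < p) (hj : j < q) :
    coeff (Finsupp.single 0 i + Finsupp.single 1 j) g = 0 := by
  rw [Ideal.mem_span_pair] at hg
  obtain ⟨a, b, rfl⟩ := hg
  rw [map_add, X_pow_eq, X_pow_eq, coeff_mul_monomial, coeff_mul_monomial,
    if_neg, if_neg, add_zero]
  · intro h
    rw [Finsupp.single_le_iff] at h
    simp at h; omega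
  · intro h
    rw [Finsupp.single_le_iff] at h
    simp at h; omega

lemma aux_coeff_span_single (q : ℕ) (hq : 1 ≤ q) (g : MvPowerSeries (Fin 2) K)
    (hg : g ∈ Ideal.span {(X 1 ^ q : MvPowerSeries (Fin 2) K)}) (n : ℕ) :
    coeff (Finsupp.single 0 n) g = 0 := by
  rw [Ideal.mem_span_singleton'] at hg
  obtain ⟨a, rfl⟩ := hg
  rw [X_pow_eq, coeff_mul_monomial, if_neg]
  intro h
  rw [Finsupp.single_le_iff] at h
  simp at h; omega

lemma aux_mem_span_pair_of_coeff (p q : ℕ) (g : MvPowerSeries (Fin 2) K)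
    (h : ∀ i j : ℕ, i < p → j < q → coeff (Finsupp.single 0 i + Finsupp.single 1 j) g = 0) :
    g ∈ Ideal.span {(X 0 ^ p : MvPowerSeries (Fin 2) K), X 1 ^ q} := by
  rw [Ideal.mem_span_pair]
  classical
  refine ⟨(fun d : Fin 2 →₀ ℕ => coeff (d + Finsupp.single 0 p) g : MvPowerSeries (Fin 2) K),
    (fun d : Fin 2 →₀ ℕ => if ((d + Finsupp.single 1 q : Fin 2 →₀ ℕ) 0) < p then
      coeff (d + Finsupp.single 1 q) g else 0 : MvPowerSeries (Fin 2) K), ?_⟩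
  rw [X_pow_eq 0 p, X_pow_eq 1 q]
  ext d
  rw [map_add]; erw [coeff_mul_monomial, coeff_mul_monomial]
  have key : ∀ (e : Fin 2 →₀ ℕ) (i : Fin 2) (k : ℕ), Finsupp.single i k ≤ e →
      (e - Finsupp.single i k) + Finsupp.single i k = e := fun e i k hk =>
    tsub_add_cancel_of_le hk
  by_cases h0 : Finsupp.single (0:Fin 2) p ≤ d
  · have hd0 : p ≤ d 0 := Finsupp.single_le_iff.mp h0
    rw [if_pos h0]
    have hc1 : coeff (d - Finsupp.single 0 p)
        (fun d : Fin 2 →₀ ℕ => coeff (d + Finsupp.single 0 p) g : MvPowerSeries (Fin 2) K)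
        = coeff d g := by
      rw [coeff_apply]
      exact congrArg (fun e => g e) (key d 0 p h0)
    rw [hc1, mul_one]
    by_cases h1 : Finsupp.single (1:Fin 2) q ≤ d
    · rw [if_pos h1]
      have hc2 : coeff (d - Finsupp.single 1 q)
          (fun d : Fin 2 →₀ ℕ => if ((d + Finsupp.single 1 q : Fin 2 →₀ ℕ) 0) < p then
            coeff (d + Finsupp.single 1 q) g else 0 : MvPowerSeries (Fin 2) K)
          = 0 := by
        show (if ((d - Finsupp.single 1 q + Finsupp.single 1 q : Fin 2 →₀ ℕ) 0) < p then coeff (d - Finsupp.single 1 q + Finsupp.single 1 q) g else 0) = 0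
        rw [key d 1 q h1, if_neg (by omega)]
      rw [hc2]; ring
    · rw [if_neg h1]; ring
  · have hd0 : ¬ p ≤ d 0 := fun h => h0 (Finsupp.single_le_iff.mpr h)
    rw [if_neg h0, zero_add]
    by_cases h1 : Finsupp.single (1:Fin 2) q ≤ d
    · rw [if_pos h1]
      have hc2 : coeff (d - Finsupp.single 1 q)
          (fun d : Fin 2 →₀ ℕ => if ((d + Finsupp.single 1 q : Fin 2 →₀ ℕ) 0) < p then
            coeff (d + Finsupp.single 1 q) g else 0 : MvPowerSeries (Fin 2) K)
          = coeff d g := by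
        show (if ((d - Finsupp.single 1 q + Finsupp.single 1 q : Fin 2 →₀ ℕ) 0) < p then coeff (d - Finsupp.single 1 q + Finsupp.single 1 q) g else 0) = coeff d g
        rw [key d 1 q h1, if_pos]
        omega
      rw [hc2, mul_one]
    · rw [if_neg h1]
      have hd1 : ¬ q ≤ d 1 := fun h => h1 (Finsupp.single_le_iff.mpr h)
      have hd : d = Finsupp.single 0 (d 0) + Finsupp.single 1 (d 1) := by
        ext x; fin_cases x <;> simp
      rw [← h (d 0) (d 1) (by omega) (by omega)]
      rw [← hd]

/-! ### Infinite dimensionality of `K[[x,y]]/⟨y^q⟩` -/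

lemma aux_not_fd (q : ℕ) (hq : 1 ≤ q) :
    ¬ FiniteDimensional K
      (MvPowerSeries (Fin 2) K ⧸ Ideal.span {(X 1 ^ q : MvPowerSeries (Fin 2) K)}) := by
  intro hFD
  set I := Ideal.span {(X 1 ^ q : MvPowerSeries (Fin 2) K)} with hI
  have hli : LinearIndependent K
      (fun n : ℕ => Ideal.Quotient.mk I (X 0 ^ n)) := by
    rw [linearIndependent_iff']
    intro s c hsum n hn
    have hmem : (∑ i ∈ s, c i • (X 0 ^ i : MvPowerSeries (Fin 2) K)) ∈ I := by
      rw [← Ideal.Quotient.eq_zero_iff_mem, ← hsum]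
      rw [map_sum]
      exact Finset.sum_congr rfl fun i _ => by
        rw [← Ideal.Quotient.mkₐ_eq_mk K, map_smul, Ideal.Quotient.mkₐ_eq_mk]
    have := aux_coeff_span_single q hq _ hmem n
    rw [map_sum] at this
    have heval : ∀ i ∈ s, c i • coeff (Finsupp.single 0 n) (X 0 ^ i : MvPowerSeries (Fin 2) K)
        = if i = n then c i else 0 := by
      intro i _
      rw [coeff_X_pow]
      by_cases h : i = n
      · subst h; simp
      · rw [if_neg (fun hh => h (Finsupp.single_injective 0 hh).symm), if_neg h, smul_zero]
    rw [show (∑ i ∈ s, coeff (Finsupp.single 0 n) (c i • (X 0 ^ i : MvPowerSeries (Fin 2) K)))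
        = ∑ i ∈ s, if i = n then c i else 0 from Finset.sum_congr rfl (fun i hi => by
          rw [map_smul]; exact heval i hi)] at this
    rw [Finset.sum_ite_eq' s n c] at this
    rw [if_pos hn] at this
    exact this
  exact Module.Finite.not_linearIndependent_of_infinite _ hli

/-! ### The quotient by `⟨x^p, y^q⟩` is `pq`-dimensional -/

noncomputable def auxPsi (p q : ℕ) : MvPowerSeries (Fin 2) K →ₗ[K] (Fin p × Fin q → K) where
  toFun g := fun c => coeff (Finsupp.single 0 (c.1 : ℕ) + Finsupp.single 1 (c.2 : ℕ)) g
  map_add' g h := by funext c; simp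
  map_smul' a g := by funext c; simp

lemma auxPsi_apply (p q : ℕ) (g : MvPowerSeries (Fin 2) K) (c : Fin p × Fin q) :
    auxPsi p q g c = coeff (Finsupp.single 0 (c.1 : ℕ) + Finsupp.single 1 (c.2 : ℕ)) g := rfl

lemma auxPsi_surj (p q : ℕ) : Function.Surjective (auxPsi (K := K) p q) := by
  intro c
  classical
  refine ⟨∑ ij : Fin p × Fin q,
    c ij • monomial (Finsupp.single 0 (ij.1 : ℕ) + Finsupp.single 1 (ij.2 : ℕ)) 1, ?_⟩
  funext ij'
  rw [auxPsi_apply, map_sum, Finset.sum_eq_single ij']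
  · rw [map_smul, coeff_monomial_same]
    simp
  · intro ij _ hne
    rw [map_smul, coeff_monomial, if_neg, smul_zero]
    intro h
    apply hne
    have h0 := congrArg (fun g : Fin 2 →₀ ℕ => g 0) h
    have h1 := congrArg (fun g : Fin 2 →₀ ℕ => g 1) h
    simp at h0 h1
    exact Prod.ext (Fin.ext h0.symm) (Fin.ext h1.symm)
  · intro h
    exact absurd (Finset.mem_univ ij') h

lemma aux_ker_psi (p q : ℕ) :
    LinearMap.ker (auxPsi (K := K) p q)
      = (Ideal.span {(X 0 ^ p : MvPowerSeries (Fin 2) K), X 1 ^ q}).restrictScalars K := by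
  ext g
  simp only [LinearMap.mem_ker, Submodule.restrictScalars_mem]
  constructor
  · intro h
    apply aux_mem_span_pair_of_coeff
    intro i j hi hj
    have := congrFun h (⟨i, hi⟩, ⟨j, hj⟩)
    rw [auxPsi_apply] at this
    simpa using this
  · intro h
    funext ij
    rw [auxPsi_apply]
    exact aux_coeff_span_pair p q g h _ _ ij.1.2 ij.2.2

noncomputable def auxQuotEquiv (p q : ℕ) :
    (MvPowerSeries (Fin 2) K ⧸ Ideal.span {(X 0 ^ p : MvPowerSeries (Fin 2) K), X 1 ^ q})
      ≃ₗ[K] (Fin p × Fin q → K) :=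
  ((Submodule.Quotient.restrictScalarsEquiv K
      (Ideal.span {(X 0 ^ p : MvPowerSeries (Fin 2) K), X 1 ^ q})).symm.trans
    ((Submodule.quotEquivOfEq _ _ (aux_ker_psi p q)).symm.trans
      ((auxPsi (K := K) p q).quotKerEquivOfSurjective (auxPsi_surj p q))))

end Aux

/-- For `f = xᵖ + y^(p-1)` in characteristic `p ≥ 3`: `μ(f) = ∞` while `τ(f) = p(p-2)`. -/
theorem stmt_2 {K : Type*} [Field K] (p : ℕ) [CharP K p] (hp : p.Prime) (h3 : 3 ≤ p)
    (f : MvPowerSeries (Fin 2) K) (hf : f = X 0 ^ p + X 1 ^ (p - 1)) :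
    ¬ FiniteDimensional K (MvPowerSeries (Fin 2) K ⧸ jIdeal f) ∧
    FiniteDimensional K (MvPowerSeries (Fin 2) K ⧸ tjIdeal f) ∧
    Module.finrank K (MvPowerSeries (Fin 2) K ⧸ tjIdeal f) = p * (p - 2) := by
  have hq : 1 ≤ p - 2 := by omega
  refine ⟨?_, ?_, ?_⟩
  · rw [aux_jIdeal_eq p h3 f hf]
    exact aux_not_fd (p - 2) hq
  · rw [aux_tjIdeal_eq p h3 f hf]
    have e := auxQuotEquiv (K := K) p (p - 2)
    exact FiniteDimensional.of_injective e.toLinearMap e.injective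
  · rw [aux_tjIdeal_eq p h3 f hf, (auxQuotEquiv (K := K) p (p - 2)).finrank_eq]
    simp [Module.finrank_pi]
end

section
/- Let K be a field of characteristic p > 0, p ≥ 3, and let f = xᵖ + y^(p−1) ∈ K[[x,y]], g = (1+x)·f. Then f and g are contact equivalent (g = u·f with the unit u = 1+x), but μ(g) = p·(p−2) is finite while μ(f) is infinite. Hence the Milnor number is not a contact invariant in positive characteristic. -/
open MvPowerSeries

/-- Contact equivalence: `g = u · φ(f)` for a unit `u` and a `K`-algebra automorphism `φ`. -/
def ContactEquiv {n : ℕ} {K : Type*} [Field K] (f g : MvPowerSeries (Fin n) K) : Prop :=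
  ∃ (φ : MvPowerSeries (Fin n) K ≃ₐ[K] MvPowerSeries (Fin n) K)
    (u : MvPowerSeries (Fin n) K), IsUnit u ∧ g = u * φ f

section Aux
variable {K : Type*} [Field K]

lemma coeff_pderiv {n : ℕ} (i : Fin n) (f : MvPowerSeries (Fin n) K) (d : Fin n →₀ ℕ) :
    coeff d (pderiv i f) = ((d i : K) + 1) * coeff (d + Finsupp.single i 1) f := rfl

lemma pderiv_add {n : ℕ} (i : Fin n) (f g : MvPowerSeries (Fin n) K) :
    pderiv i (f + g) = pderiv i f + pderiv i g := by
  ext d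
  simp [_root_.coeff_pderiv, mul_add]

lemma pderiv_monomial {n : ℕ} (i : Fin n) (d : Fin n →₀ ℕ) (c : K) :
    pderiv i (monomial d c) = monomial (d - Finsupp.single i 1) ((d i : K) * c) := by
  ext e
  rw [_root_.coeff_pderiv]
  by_cases h : e + Finsupp.single i 1 = d
  · have hdi : d i = e i + 1 := by
      rw [← h]; simp
    have hde : d - Finsupp.single i 1 = e := by
      rw [← h, add_tsub_cancel_right]
    rw [h, coeff_monomial_same, hde, coeff_monomial_same, hdi]
    push_cast
    ring
  · rw [coeff_monomial_ne h, mul_zero]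
    by_cases h2 : e = d - Finsupp.single i 1
    · have hdi : d i = 0 := by
        by_contra hd
        apply h
        rw [h2, tsub_add_cancel_of_le]
        exact Finsupp.single_le_iff.mpr (Nat.one_le_iff_ne_zero.mpr hd)
      rw [h2, coeff_monomial_same, hdi, Nat.cast_zero, zero_mul]
    · rw [coeff_monomial_ne h2]
end Aux

section Trunc
variable {K : Type*} [Field K]

lemma eval00 (i j : ℕ) : ((Finsupp.single 0 i + Finsupp.single 1 j : Fin 2 →₀ ℕ)) 0 = i := by
  rw [Finsupp.add_apply, Finsupp.single_eq_same, Finsupp.single_eq_of_ne (by decide), add_zero]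

lemma eval11 (i j : ℕ) : ((Finsupp.single 0 i + Finsupp.single 1 j : Fin 2 →₀ ℕ)) 1 = j := by
  rw [Finsupp.add_apply, Finsupp.single_eq_same, Finsupp.single_eq_of_ne (by decide), zero_add]

lemma decomp (d : Fin 2 →₀ ℕ) : Finsupp.single 0 (d 0) + Finsupp.single 1 (d 1) = d := by
  ext i
  fin_cases i
  · simpa using eval00 (d 0) (d 1)
  · simpa using eval11 (d 0) (d 1)

noncomputable def trunc2 (K : Type*) [Field K] (a b : ℕ) :
    MvPowerSeries (Fin 2) K →ₗ[K] (Fin a × Fin b → K) where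
  toFun f q := coeff (Finsupp.single 0 (q.1 : ℕ) + Finsupp.single 1 (q.2 : ℕ)) f
  map_add' f g := by funext q; simp
  map_smul' c f := by funext q; simp

lemma trunc2_apply (a b : ℕ) (f : MvPowerSeries (Fin 2) K) (q : Fin a × Fin b) :
    trunc2 K a b f q = coeff (Finsupp.single 0 (q.1 : ℕ) + Finsupp.single 1 (q.2 : ℕ)) f := rfl

lemma trunc2_surj (a b : ℕ) : Function.Surjective (trunc2 K a b) := by
  intro φ
  refine ⟨show MvPowerSeries (Fin 2) K from
    fun d => if h : d 0 < a ∧ d 1 < b then φ (⟨d 0, h.1⟩, ⟨d 1, h.2⟩) else 0, ?_⟩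
  funext q
  obtain ⟨⟨i, hi⟩, ⟨j, hj⟩⟩ := q
  rw [trunc2_apply, coeff_apply]
  dsimp only
  have hc : ((Finsupp.single 0 i + Finsupp.single 1 j : Fin 2 →₀ ℕ)) 0 < a ∧
      ((Finsupp.single 0 i + Finsupp.single 1 j : Fin 2 →₀ ℕ)) 1 < b :=
    ⟨by rw [eval00]; exact hi, by rw [eval11]; exact hj⟩
  rw [dif_pos hc]
  exact congrArg φ (Prod.ext (Fin.ext (eval00 i j)) (Fin.ext (eval11 i j)))

lemma ker_trunc (a b : ℕ) (ha : 0 < a) (hb : 0 < b) :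
    (Ideal.span {(X 0 : MvPowerSeries (Fin 2) K) ^ a, X 1 ^ b}).restrictScalars K
      = LinearMap.ker (trunc2 K a b) := by
  ext f
  simp only [Submodule.restrictScalars_mem, LinearMap.mem_ker]
  constructor
  · intro hf
    rw [Ideal.mem_span_pair] at hf
    obtain ⟨u, v, rfl⟩ := hf
    funext q
    rw [trunc2_apply, map_add, X_pow_eq, X_pow_eq, coeff_mul_monomial, coeff_mul_monomial,
      if_neg, if_neg, add_zero, Pi.zero_apply]
    · intro hle
      exact absurd (Finsupp.single_le_iff.mp hle) (by rw [eval11]; omega)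
    · intro hle
      exact absurd (Finsupp.single_le_iff.mp hle) (by rw [eval00]; omega)
  · intro hf
    have hf' : ∀ d : Fin 2 →₀ ℕ, d 0 < a → d 1 < b → coeff d f = 0 := by
      intro d hd0 hd1
      have := congrFun hf (⟨d 0, hd0⟩, ⟨d 1, hd1⟩)
      rw [trunc2_apply] at this
      simpa [decomp d] using this
    rw [Ideal.mem_span_pair]
    refine ⟨show MvPowerSeries (Fin 2) K from fun e => coeff (e + Finsupp.single 0 a) f,
      show MvPowerSeries (Fin 2) K from
        fun e => if e 0 < a then coeff (e + Finsupp.single 1 b) f else 0, ?_⟩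
    ext d
    rw [map_add, X_pow_eq, X_pow_eq, coeff_mul_monomial, coeff_mul_monomial]
    rw [coeff_apply (d := d - Finsupp.single 0 a), coeff_apply (d := d - Finsupp.single 1 b)]
    have hsub1 : (d - Finsupp.single (1 : Fin 2) b) 0 = d 0 := by
      rw [Finsupp.tsub_apply, Finsupp.single_eq_of_ne (by decide), Nat.sub_zero]
    by_cases h0 : a ≤ d 0
    · rw [if_pos (Finsupp.single_le_iff.mpr h0),
        tsub_add_cancel_of_le (Finsupp.single_le_iff.mpr h0), mul_one]
      by_cases h1 : b ≤ d 1
      · rw [if_pos (Finsupp.single_le_iff.mpr h1), hsub1, if_neg (by omega), zero_mul, add_zero]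
      · rw [if_neg (fun hle => h1 (Finsupp.single_le_iff.mp hle)), add_zero]
    · rw [if_neg (fun hle => h0 (Finsupp.single_le_iff.mp hle)), zero_add]
      by_cases h1 : b ≤ d 1
      · rw [if_pos (Finsupp.single_le_iff.mpr h1), hsub1, if_pos (by omega),
          tsub_add_cancel_of_le (Finsupp.single_le_iff.mpr h1), mul_one]
      · rw [if_neg (fun hle => h1 (Finsupp.single_le_iff.mp hle))]
        exact (hf' d (by omega) (by omega)).symm

noncomputable def quotEquiv (K : Type*) [Field K] (a b : ℕ) (ha : 0 < a) (hb : 0 < b) :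
    (MvPowerSeries (Fin 2) K ⧸ Ideal.span {(X 0 : MvPowerSeries (Fin 2) K) ^ a, X 1 ^ b})
      ≃ₗ[K] (Fin a × Fin b → K) :=
  ((Submodule.Quotient.restrictScalarsEquiv K _).symm.trans
    (Submodule.quotEquivOfEq _ _ (ker_trunc a b ha hb))).trans
    (LinearMap.quotKerEquivOfSurjective _ (trunc2_surj a b))
end Trunc

section Derivs
variable {K : Type*} [Field K] (p : ℕ) [CharP K p]

lemma dXpow_same (k : ℕ) (i : Fin 2) :
    pderiv i ((X i : MvPowerSeries (Fin 2) K) ^ k)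
      = monomial (Finsupp.single i (k - 1)) ((k : K)) := by
  rw [X_pow_eq, pderiv_monomial, Finsupp.single_eq_same, ← Finsupp.single_tsub, mul_one]

lemma dXpow_other (k : ℕ) (i j : Fin 2) (h : i ≠ j) :
    pderiv j ((X i : MvPowerSeries (Fin 2) K) ^ k) = 0 := by
  rw [X_pow_eq, pderiv_monomial, Finsupp.single_eq_of_ne' h, Nat.cast_zero, zero_mul, map_zero]

lemma hXXq (q : ℕ) : (X 0 : MvPowerSeries (Fin 2) K) * X 1 ^ q
    = monomial (Finsupp.single 0 1 + Finsupp.single 1 q) 1 := by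
  rw [X_pow_eq, X_def, monomial_mul_monomial, one_mul]

lemma dG' (q : ℕ) : pderiv (0 : Fin 2) ((X 0 : MvPowerSeries (Fin 2) K) * X 1 ^ q)
    = X 1 ^ q := by
  rw [hXXq, pderiv_monomial, eval00, add_tsub_cancel_left, Nat.cast_one, one_mul, ← X_pow_eq]

lemma dH' (q : ℕ) (hq : 1 ≤ q) :
    pderiv (1 : Fin 2) ((X 0 : MvPowerSeries (Fin 2) K) * X 1 ^ q)
    = monomial (Finsupp.single 0 1 + Finsupp.single 1 (q - 1)) ((q : K)) := by
  rw [hXXq, pderiv_monomial, eval11, mul_one,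
    add_tsub_assoc_of_le (Finsupp.single_le_iff.mpr (by rwa [Finsupp.single_eq_same])),
    ← Finsupp.single_tsub]
end Derivs


/-- For `f = xᵖ + y^(p-1)` and `g = (1+x)·f` in characteristic `p ≥ 3`: `f` and `g`
are contact equivalent, `μ(g) = p(p-2)` is finite, while `μ(f)` is infinite. -/
theorem stmt_3 {K : Type*} [Field K] (p : ℕ) [CharP K p] (hp : p.Prime) (h3 : 3 ≤ p)
    (f g : MvPowerSeries (Fin 2) K) (hf : f = X 0 ^ p + X 1 ^ (p - 1))
    (hg : g = (1 + X 0) * f) :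
    ContactEquiv f g ∧
    FiniteDimensional K (MvPowerSeries (Fin 2) K ⧸ jIdeal g) ∧
    Module.finrank K (MvPowerSeries (Fin 2) K ⧸ jIdeal g) = p * (p - 2) ∧
    ¬ FiniteDimensional K (MvPowerSeries (Fin 2) K ⧸ jIdeal f) := by
  unfold ContactEquiv jIdeal
  have hcast0 : ((p : ℕ) : K) = 0 := CharP.cast_eq_zero K p
  have hcast1 : (((p - 1 : ℕ)) : K) = -1 := by
    rw [Nat.cast_sub (by omega), hcast0, Nat.cast_one, zero_sub]
  have hcastp1 : (((p + 1 : ℕ)) : K) = 1 := by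
    rw [Nat.cast_add, hcast0, Nat.cast_one, zero_add]
  have h21 : p - 1 - 1 = p - 2 := by omega
  have hA : pderiv (0 : Fin 2) ((X 0 : MvPowerSeries (Fin 2) K) ^ p) = 0 := by
    rw [dXpow_same, hcast0, map_zero]
  have hB : pderiv (1 : Fin 2) ((X 0 : MvPowerSeries (Fin 2) K) ^ p) = 0 :=
    dXpow_other _ _ _ (by decide)
  have hC : pderiv (0 : Fin 2) ((X 1 : MvPowerSeries (Fin 2) K) ^ (p - 1)) = 0 :=
    dXpow_other _ _ _ (by decide)
  have hD : pderiv (1 : Fin 2) ((X 1 : MvPowerSeries (Fin 2) K) ^ (p - 1))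
      = -(X 1 ^ (p - 2)) := by
    rw [dXpow_same, hcast1, h21, X_pow_eq]
    exact map_neg (monomial _) 1
  have hE : pderiv (0 : Fin 2) ((X 0 : MvPowerSeries (Fin 2) K) ^ (p + 1)) = X 0 ^ p := by
    rw [dXpow_same, hcastp1, Nat.add_sub_cancel, ← X_pow_eq]
  have hF : pderiv (1 : Fin 2) ((X 0 : MvPowerSeries (Fin 2) K) ^ (p + 1)) = 0 :=
    dXpow_other _ _ _ (by decide)
  have hG : pderiv (0 : Fin 2) ((X 0 : MvPowerSeries (Fin 2) K) * X 1 ^ (p - 1))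
      = X 1 ^ (p - 1) := dG' _
  have hH : pderiv (1 : Fin 2) ((X 0 : MvPowerSeries (Fin 2) K) * X 1 ^ (p - 1))
      = -((X 0 : MvPowerSeries (Fin 2) K) * X 1 ^ (p - 2)) := by
    rw [dH' _ (by omega), hcast1, h21, hXXq]
    exact map_neg (monomial _) 1
  have hg2 : g = (X 0 : MvPowerSeries (Fin 2) K) ^ p + X 1 ^ (p - 1)
      + X 0 ^ (p + 1) + X 0 * X 1 ^ (p - 1) := by
    rw [hg, hf]; ring
  have hd0g : pderiv (0 : Fin 2) g = X 0 ^ p + X 1 ^ (p - 1) := by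
    rw [hg2, pderiv_add, pderiv_add, pderiv_add, hA, hC, hE, hG]; ring
  have hd1g : pderiv (1 : Fin 2) g = -(1 + X 0) * X 1 ^ (p - 2) := by
    rw [hg2, pderiv_add, pderiv_add, pderiv_add, hB, hD, hF, hH]; ring
  have hd0f : pderiv (0 : Fin 2) f = 0 := by rw [hf, pderiv_add, hA, hC, add_zero]
  have hd1f : pderiv (1 : Fin 2) f = -(X 1 ^ (p - 2)) := by
    rw [hf, pderiv_add, hB, hD, zero_add]
  have hu : IsUnit ((1 : MvPowerSeries (Fin 2) K) + X 0) := by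
    rw [isUnit_iff_constantCoeff]
    simp
  -- the ideal of g
  have hmemy : (X 1 : MvPowerSeries (Fin 2) K) ^ (p - 2)
      ∈ Ideal.span (Set.range fun i => pderiv i g) := by
    obtain ⟨w, hw⟩ := hu.neg
    have hm : pderiv (1 : Fin 2) g ∈ Ideal.span (Set.range fun i => pderiv i g) :=
      Ideal.subset_span ⟨1, rfl⟩
    have heq : (X 1 : MvPowerSeries (Fin 2) K) ^ (p - 2) = ↑w⁻¹ * pderiv (1 : Fin 2) g := by
      rw [hd1g, ← hw, Units.inv_mul_cancel_left]
    rw [heq]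
    exact Ideal.mul_mem_left _ _ hm
  have hmemx : (X 0 : MvPowerSeries (Fin 2) K) ^ p
      ∈ Ideal.span (Set.range fun i => pderiv i g) := by
    have heq : (X 0 : MvPowerSeries (Fin 2) K) ^ p
        = pderiv (0 : Fin 2) g - X 1 ^ (p - 2) * X 1 := by
      rw [hd0g, show p - 1 = p - 2 + 1 by omega, pow_succ]; ring
    rw [heq]
    exact sub_mem (Ideal.subset_span ⟨0, rfl⟩) (Ideal.mul_mem_right _ _ hmemy)
  have hJI : Ideal.span (Set.range fun i => pderiv i g)
      = Ideal.span {(X 0 : MvPowerSeries (Fin 2) K) ^ p, X 1 ^ (p - 2)} := by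
    apply le_antisymm
    · rw [Ideal.span_le]
      rintro x ⟨i, rfl⟩
      fin_cases i
      · show pderiv (0 : Fin 2) g ∈ _
        rw [hd0g, show p - 1 = p - 2 + 1 by omega, pow_succ]
        exact add_mem (Ideal.subset_span (Set.mem_insert _ _))
          (Ideal.mul_mem_right _ _ (Ideal.subset_span (Set.mem_insert_of_mem _ rfl)))
      · show pderiv (1 : Fin 2) g ∈ _
        rw [hd1g]
        exact Ideal.mul_mem_left _ _ (Ideal.subset_span (Set.mem_insert_of_mem _ rfl))
    · rw [Ideal.span_le]
      rintro x hx
      simp only [Set.mem_insert_iff, Set.mem_singleton_iff] at hx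
      rcases hx with rfl | rfl
      · exact hmemx
      · exact hmemy
  have hle : Ideal.span (Set.range fun i => pderiv i f)
      ≤ Ideal.span {(X 1 : MvPowerSeries (Fin 2) K) ^ (p - 2)} := by
    rw [Ideal.span_le]
    rintro x ⟨i, rfl⟩
    fin_cases i
    · show pderiv (0 : Fin 2) f ∈ _
      rw [hd0f]; exact zero_mem _
    · show pderiv (1 : Fin 2) f ∈ _
      rw [hd1f]
      exact neg_mem (Ideal.subset_span rfl)
  refine ⟨⟨AlgEquiv.refl, 1 + X 0, hu, by rw [hg]; rfl⟩, ?_, ?_, ?_⟩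
  · rw [hJI]
    exact Module.Finite.equiv (quotEquiv K p (p - 2) (by omega) (by omega)).symm
  · rw [hJI, LinearEquiv.finrank_eq (quotEquiv K p (p - 2) (by omega) (by omega)),
      Module.finrank_fintype_fun_eq_card, Fintype.card_prod, Fintype.card_fin, Fintype.card_fin]
  · intro hFD
    have hli : LinearIndependent K
        (fun n : ℕ => (Ideal.Quotient.mkₐ K (Ideal.span (Set.range fun i => pderiv i f)))
          ((X 0 : MvPowerSeries (Fin 2) K) ^ n)) := by
      rw [linearIndependent_iff']
      intro s c hsum n hn
      have h0 : (Ideal.Quotient.mkₐ K (Ideal.span (Set.range fun i => pderiv i f)))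
          (∑ i ∈ s, c i • (X 0 : MvPowerSeries (Fin 2) K) ^ i) = 0 := by
        rw [map_sum]
        simp_rw [map_smul]
        exact hsum
      rw [Ideal.Quotient.mkₐ_eq_mk, Ideal.Quotient.eq_zero_iff_mem] at h0
      have hmem2 := hle h0
      rw [Ideal.mem_span_singleton] at hmem2
      obtain ⟨h, hh⟩ := hmem2
      have hz : coeff (Finsupp.single 0 n)
          (∑ i ∈ s, c i • (X 0 : MvPowerSeries (Fin 2) K) ^ i) = 0 := by
        rw [hh, X_pow_eq, coeff_monomial_mul, if_neg]
        intro hle'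
        have h' := Finsupp.single_le_iff.mp hle'
        rw [Finsupp.single_eq_of_ne (by decide)] at h'
        omega
      rw [map_sum, Finset.sum_eq_single_of_mem n hn] at hz
      · rwa [map_smul, X_pow_eq, coeff_monomial_same, smul_eq_mul, mul_one] at hz
      · intro b _ hbn
        rw [map_smul, X_pow_eq, coeff_monomial_ne
          (fun hEq => hbn ((Finsupp.single_injective 0) hEq).symm), smul_zero]
    haveI := hFD
    haveI := hli.finite
    exact not_finite ℕ
end

section
/- Let K be a field and φ an automorphism of the local K-algebra K[[x₁,…,xₙ]]. Then for any f ∈ K[[x]], the Jacobian ideal satisfies j(φ(f)) = φ(j(f)). Consequently the Milnor number is invariant under right equivalence: μ(φ(f)) = μ(f). -/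
open MvPowerSeries

namespace Aux

variable {n : ℕ} {K : Type*} [Field K]

local notation "R" => MvPowerSeries (Fin n) K

lemma coeff_pderiv (i : Fin n) (f : R) (d : Fin n →₀ ℕ) :
    coeff d (pderiv i f) = ((d i : K) + 1) * coeff (d + Finsupp.single i 1) f := rfl

lemma pderiv_add (i : Fin n) (f g : R) : pderiv i (f + g) = pderiv i f + pderiv i g := by
  ext d
  simp [coeff_pderiv, map_add, mul_add]

lemma pderiv_C (i : Fin n) (c : K) : pderiv i (C c) = 0 := by
  ext d
  rw [coeff_pderiv]
  classical
  rw [coeff_C, if_neg, mul_zero, map_zero]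
  intro h
  have := DFunLike.congr_fun h i
  simp at this

lemma key_sum (d : Fin n →₀ ℕ) (i : Fin n) (F : (Fin n →₀ ℕ) → (Fin n →₀ ℕ) → K) :
    ∑ p ∈ Finset.HasAntidiagonal.antidiagonal (d + Finsupp.single i 1), ((p.2 : Fin n →₀ ℕ) i : K) * F (p.1 : Fin n →₀ ℕ) p.2
      = ∑ p ∈ Finset.HasAntidiagonal.antidiagonal d, (((p.2 : Fin n →₀ ℕ) i : K) + 1) * F (p.1 : Fin n →₀ ℕ) (p.2 + Finsupp.single i 1) := by
  classical
  have hfil := Finset.sum_filter_of_ne (p := fun p => p.2 i ≠ 0)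
    (s := Finset.HasAntidiagonal.antidiagonal (d + Finsupp.single i 1))
    (f := fun p => ((p.2 : Fin n →₀ ℕ) i : K) * F (p.1 : Fin n →₀ ℕ) p.2)
    (by intro p _ h hc; simp [hc] at h)
  rw [← hfil]
  refine Finset.sum_nbij' (fun p => (p.1, p.2 - Finsupp.single i 1))
    (fun p => (p.1, p.2 + Finsupp.single i 1)) ?_ ?_ ?_ ?_ ?_
  · rintro ⟨a, b⟩ hab
    simp only [Finset.mem_filter, Finset.HasAntidiagonal.mem_antidiagonal] at hab ⊢
    obtain ⟨h1, h2⟩ := hab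
    have hle : Finsupp.single i 1 ≤ b := Finsupp.single_le_iff.2 (Nat.one_le_iff_ne_zero.2 h2)
    have : a + (b - Finsupp.single i 1 + Finsupp.single i 1) = d + Finsupp.single i 1 := by
      rw [tsub_add_cancel_of_le hle]; exact h1
    rw [← add_assoc] at this
    exact add_right_cancel this
  · rintro ⟨a, b⟩ hab
    simp only [Finset.HasAntidiagonal.mem_antidiagonal] at hab
    simp only [Finset.mem_filter, Finset.HasAntidiagonal.mem_antidiagonal]
    constructor
    · rw [← add_assoc, hab]
    · simp
  · rintro ⟨a, b⟩ hab
    simp only [Finset.mem_filter, Finset.HasAntidiagonal.mem_antidiagonal] at hab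
    have hle : Finsupp.single i 1 ≤ b := Finsupp.single_le_iff.2 (Nat.one_le_iff_ne_zero.2 hab.2)
    simp [tsub_add_cancel_of_le hle]
  · rintro ⟨a, b⟩ _
    simp
  · rintro ⟨a, b⟩ hab
    simp only [Finset.mem_filter, Finset.HasAntidiagonal.mem_antidiagonal] at hab
    have hle : Finsupp.single i 1 ≤ b := Finsupp.single_le_iff.2 (Nat.one_le_iff_ne_zero.2 hab.2)
    have hb : b - Finsupp.single i 1 + Finsupp.single i 1 = b := tsub_add_cancel_of_le hle
    have hbi : (((b - Finsupp.single i 1) : Fin n →₀ ℕ) i : K) + 1 = (b i : K) := by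
      have := DFunLike.congr_fun hb i
      simp only [Finsupp.add_apply, Finsupp.single_eq_same] at this
      exact_mod_cast congrArg (fun m : ℕ => (m : K)) this
    rw [hb, hbi]

lemma pderiv_mul (i : Fin n) (f g : R) :
    pderiv i (f * g) = f * pderiv i g + g * pderiv i f := by
  classical
  ext d
  rw [map_add, coeff_pderiv, coeff_mul, coeff_mul, coeff_mul, Finset.mul_sum]
  have step1 : ∀ p ∈ Finset.HasAntidiagonal.antidiagonal (d + Finsupp.single i 1),
      ((d i : K) + 1) * (coeff p.1 f * coeff p.2 g)
        = ((p.1 : Fin n →₀ ℕ) i : K) * (coeff (p.2 : Fin n →₀ ℕ) g * coeff p.1 f)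
          + ((p.2 : Fin n →₀ ℕ) i : K) * (coeff p.1 f * coeff p.2 g) := by
    rintro ⟨a, b⟩ hab
    rw [Finset.HasAntidiagonal.mem_antidiagonal] at hab
    have : a i + b i = d i + 1 := by
      have := DFunLike.congr_fun hab i
      simpa using this
    have hcast : (a i : K) + (b i : K) = (d i : K) + 1 := by exact_mod_cast congrArg (fun m : ℕ => (m : K)) this
    simp only []
    rw [← hcast]
    ring
  rw [Finset.sum_congr rfl step1, Finset.sum_add_distrib]
  have swap1 : ∑ p ∈ Finset.HasAntidiagonal.antidiagonal (d + Finsupp.single i 1),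
      ((p.1 : Fin n →₀ ℕ) i : K) * (coeff (p.2 : Fin n →₀ ℕ) g * coeff p.1 f)
      = ∑ p ∈ Finset.HasAntidiagonal.antidiagonal (d + Finsupp.single i 1),
      ((p.2 : Fin n →₀ ℕ) i : K) * (coeff (p.1 : Fin n →₀ ℕ) g * coeff p.2 f) := by
    conv_lhs => rw [← Finset.HasAntidiagonal.map_swap_antidiagonal (n := d + Finsupp.single i 1)]
    rw [Finset.sum_map]
    simp
  rw [swap1, key_sum d i (fun a b => (coeff a) g * (coeff b) f),
    key_sum d i (fun a b => (coeff a) f * (coeff b) g)]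
  rw [add_comm]
  congr 1
  · exact Finset.sum_congr rfl (by rintro ⟨a, b⟩ _; rw [coeff_pderiv]; ring)
  · exact Finset.sum_congr rfl (by rintro ⟨a, b⟩ _; rw [coeff_pderiv]; ring)


/-- total degree of an exponent -/
def Dg (d : Fin n →₀ ℕ) : ℕ := ∑ j, d j

lemma Dg_add (a b : Fin n →₀ ℕ) : Dg (a + b) = Dg a + Dg b := by
  simp [Dg, Finset.sum_add_distrib]

lemma Dg_single (i : Fin n) : Dg (Finsupp.single i 1) = 1 := by
  classical
  simp [Dg, Finsupp.single_apply]

lemma Dg_eq_zero {d : Fin n →₀ ℕ} (h : Dg d = 0) : d = 0 := by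
  ext j
  have := Finset.sum_eq_zero_iff.mp h j (Finset.mem_univ j)
  simpa using this

/-- the ideal of power series all of whose coefficients in degree `< k` vanish -/
def idl (n : ℕ) (K : Type*) [Field K] (k : ℕ) : Ideal (MvPowerSeries (Fin n) K) where
  carrier := {f | ∀ d, Dg d < k → coeff d f = 0}
  zero_mem' := by intro d _; simp
  add_mem' := by
    intro f g hf hg d hd
    rw [map_add, hf d hd, hg d hd, add_zero]
  smul_mem' := by
    classical
    intro c f hf d hd
    rw [smul_eq_mul, coeff_mul]
    refine Finset.sum_eq_zero ?_
    rintro ⟨a, b⟩ hab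
    simp only [Finset.HasAntidiagonal.mem_antidiagonal] at hab
    have : Dg b ≤ Dg d := by rw [← hab, Dg_add]; exact Nat.le_add_left _ _
    rw [hf b (lt_of_le_of_lt this hd), mul_zero]

lemma mem_idl {k : ℕ} {f : R} : f ∈ idl n K k ↔ ∀ d, Dg d < k → coeff d f = 0 := Iff.rfl

lemma mul_mem_idl {j l : ℕ} {f g : R} (hf : f ∈ idl n K j) (hg : g ∈ idl n K l) :
    f * g ∈ idl n K (j + l) := by
  classical
  intro d hd
  rw [coeff_mul]
  refine Finset.sum_eq_zero ?_
  rintro ⟨a, b⟩ hab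
  simp only [Finset.HasAntidiagonal.mem_antidiagonal] at hab
  have hD : Dg a + Dg b = Dg d := by rw [← Dg_add, hab]
  rcases lt_or_ge (Dg a) j with h | h
  · rw [hf a h, zero_mul]
  · rw [hg b (by omega), mul_zero]

lemma X_mem_idl_one (i : Fin n) : (X i : R) ∈ idl n K 1 := by
  intro d hd
  have hd0 : d = 0 := Dg_eq_zero (by omega)
  rw [hd0]
  exact coeff_zero_X i

lemma pow_idl_le (k : ℕ) : (idl n K 1) ^ k ≤ idl n K k := by
  induction k with
  | zero => intro f _ d hd; omega
  | succ k ih =>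
      rw [pow_succ]
      refine Ideal.mul_le.2 ?_
      intro f hf g hg
      exact mul_mem_idl (ih hf) hg

lemma mem_pow_of_mem_idl : ∀ (k : ℕ) (f : R), f ∈ idl n K k → f ∈ (idl n K 1) ^ k := by
  classical
  intro k
  induction k with
  | zero => intro f _; simp
  | succ k ih =>
      intro f hf
      set g : Fin n → R := fun i d =>
        if (d + Finsupp.single i 1).support.min = (i : WithTop (Fin n)) then
          coeff (d + Finsupp.single i 1) f else 0 with hg
      have hgmem : ∀ i, g i ∈ idl n K k := by
        intro i d hd
        have : coeff d (g i) = g i d := rfl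
        rw [this, hg]
        simp only []
        split_ifs with h
        · exact hf _ (by rw [Dg_add, Dg_single]; omega)
        · rfl
      have hgd : ∀ (i : Fin n) (d' : Fin n →₀ ℕ), coeff d' (g i) =
          if (d' + Finsupp.single i 1).support.min = (i : WithTop (Fin n)) then
            coeff (d' + Finsupp.single i 1) f else 0 := fun i d' => rfl
      have hfeq : f = ∑ i, X i * g i := by
        ext d
        rw [map_sum]
        by_cases hd : d = 0
        · subst hd
          have h0 : coeff (0 : Fin n →₀ ℕ) f = 0 := hf 0 (by simp [Dg])
          rw [h0]
          refine (Finset.sum_eq_zero ?_).symm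
          intro i _
          rw [show (X i : R) = monomial (Finsupp.single i 1) 1 from rfl, coeff_monomial_mul,
            if_neg]
          intro hle
          have := Finsupp.single_le_iff.mp hle
          simp at this
        · have hsupp : d.support.Nonempty := Finsupp.support_nonempty_iff.2 hd
          set i0 := d.support.min' hsupp with hi0
          have hmin : d.support.min = (i0 : WithTop (Fin n)) := (Finset.coe_min' hsupp).symm
          have hi0mem : i0 ∈ d.support := Finset.min'_mem _ _
          have hle : Finsupp.single i0 1 ≤ d :=
            Finsupp.single_le_iff.2 (Nat.one_le_iff_ne_zero.2 (Finsupp.mem_support_iff.mp hi0mem))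
          have hsub : d - Finsupp.single i0 1 + Finsupp.single i0 1 = d :=
            tsub_add_cancel_of_le hle
          rw [Finset.sum_eq_single i0]
          · rw [show (X i0 : R) = monomial (Finsupp.single i0 1) 1 from rfl,
              coeff_monomial_mul, if_pos hle, one_mul, hgd, hsub, if_pos hmin]
          · intro i _ hne
            rw [show (X i : R) = monomial (Finsupp.single i 1) 1 from rfl,
              coeff_monomial_mul]
            split_ifs with h
            · rw [one_mul, hgd, tsub_add_cancel_of_le h, hmin, if_neg, ]
              intro hcon
              exact hne (by exact_mod_cast hcon.symm)
            · rfl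
          · intro hcon
            exact absurd (Finset.mem_univ i0) hcon
      rw [hfeq, pow_succ']
      refine Ideal.sum_mem _ ?_
      intro i _
      exact Ideal.mul_mem_mul (X_mem_idl_one i) (ih _ (hgmem i))

lemma idl_eq_pow (k : ℕ) : idl n K k = (idl n K 1) ^ k :=
  le_antisymm (fun f hf => mem_pow_of_mem_idl k f hf) (pow_idl_le k)


lemma pderiv_X_self (i : Fin n) : pderiv i (X i : R) = 1 := by
  classical
  ext d
  rw [coeff_pderiv, coeff_X, coeff_one]
  by_cases hd : d = 0
  · subst hd
    simp
  · rw [if_neg, if_neg hd, mul_zero]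
    intro h
    have : d + Finsupp.single i 1 = 0 + Finsupp.single i 1 := by rw [h, zero_add]
    exact hd (add_right_cancel this)

lemma pderiv_X_ne {i i' : Fin n} (h : i ≠ i') : pderiv i (X i' : R) = 0 := by
  classical
  ext d
  rw [coeff_pderiv, coeff_X, if_neg, mul_zero, map_zero]
  intro hc
  have := DFunLike.congr_fun hc i
  simp [Finsupp.single_apply, (Ne.symm h)] at this

lemma coeff_mem_idl {k : ℕ} {f : R} (hf : f ∈ idl n K k) {d : Fin n →₀ ℕ} (hd : Dg d < k) :
    coeff d f = 0 := hf d hd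

lemma mem_idl_one_iff {f : R} : f ∈ idl n K 1 ↔ constantCoeff f = 0 := by
  constructor
  · intro hf
    rw [← coeff_zero_eq_constantCoeff]
    exact hf 0 (by simp [Dg])
  · intro h d hd
    have : d = 0 := Dg_eq_zero (by omega)
    subst this
    rw [coeff_zero_eq_constantCoeff]
    exact h

lemma phi_mem_idl_one (φ : R ≃ₐ[K] R) {f : R} (hf : f ∈ idl n K 1) : φ f ∈ idl n K 1 := by
  rw [mem_idl_one_iff] at hf ⊢
  by_contra h
  have hu : IsUnit (φ f) := isUnit_iff_constantCoeff.mpr (isUnit_iff_ne_zero.mpr h)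
  have hf' : IsUnit f := by
    have := hu.map (φ.symm : R →+* R)
    rwa [show (φ.symm : R →+* R) (φ f) = f from φ.symm_apply_apply f] at this
  have := isUnit_iff_constantCoeff.mp hf'
  rw [hf] at this
  exact not_isUnit_zero this

lemma phi_mem_idl (φ : R ≃ₐ[K] R) (k : ℕ) {f : R} (hf : f ∈ idl n K k) : φ f ∈ idl n K k := by
  have hone : Ideal.map (φ : R →+* R) (idl n K 1) ≤ idl n K 1 :=
    Ideal.map_le_iff_le_comap.2 (fun x hx => phi_mem_idl_one φ hx)
  have hmem : φ f ∈ Ideal.map (φ : R →+* R) (idl n K k) := Ideal.mem_map_of_mem _ hf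
  rw [idl_eq_pow k, Ideal.map_pow] at hmem
  rw [idl_eq_pow k]
  exact Ideal.pow_right_mono hone k hmem

lemma pderiv_mem_idl (i : Fin n) (k : ℕ) {f : R} (hf : f ∈ idl n K (k + 1)) :
    pderiv i f ∈ idl n K k := by
  intro d hd
  rw [coeff_pderiv, coeff_mem_idl hf (by rw [Dg_add, Dg_single]; omega), mul_zero]

/-- the right-hand side of the chain rule -/
noncomputable def chainAux (φ : R ≃ₐ[K] R) (j : Fin n) (f : R) : R :=
  ∑ i, φ (pderiv i f) * pderiv j (φ (X i))

lemma chainAux_add (φ : R ≃ₐ[K] R) (j : Fin n) (f g : R) :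
    chainAux φ j (f + g) = chainAux φ j f + chainAux φ j g := by
  simp [chainAux, pderiv_add, map_add, add_mul, Finset.sum_add_distrib]

lemma chainAux_mul (φ : R ≃ₐ[K] R) (j : Fin n) (f g : R) :
    chainAux φ j (f * g) = φ f * chainAux φ j g + φ g * chainAux φ j f := by
  simp only [chainAux, pderiv_mul, map_add, map_mul, add_mul, Finset.sum_add_distrib,
    Finset.mul_sum, mul_assoc]

lemma chainAux_X (φ : R ≃ₐ[K] R) (j i : Fin n) :
    chainAux φ j (X i) = pderiv j (φ (X i)) := by
  rw [chainAux, Finset.sum_eq_single i]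
  · rw [pderiv_X_self, map_one, one_mul]
  · intro i' _ hne
    rw [pderiv_X_ne hne, map_zero, zero_mul]
  · intro hcon
    exact absurd (Finset.mem_univ i) hcon

lemma phi_C (φ : R ≃ₐ[K] R) (a : K) : φ (C a) = C a := by
  have : (C) a = algebraMap K R a := by rw [c_eq_algebraMap]
  rw [this, φ.commutes]

lemma chain_poly (φ : R ≃ₐ[K] R) (j : Fin n) (p : MvPolynomial (Fin n) K) :
    pderiv j (φ ↑p) = chainAux φ j ↑p := by
  induction p using MvPolynomial.induction_on with
  | C a =>
      rw [MvPolynomial.coe_C, phi_C, pderiv_C, chainAux]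
      refine (Finset.sum_eq_zero ?_).symm
      intro i _
      rw [pderiv_C, map_zero, zero_mul]
  | add p q hp hq =>
      rw [MvPolynomial.coe_add, map_add, pderiv_add, chainAux_add, hp, hq]
  | mul_X p i hp =>
      rw [MvPolynomial.coe_mul, MvPolynomial.coe_X, map_mul, pderiv_mul, chainAux_mul,
        chainAux_X, hp]

lemma chain (φ : R ≃ₐ[K] R) (j : Fin n) (f : R) :
    pderiv j (φ f) = chainAux φ j f := by
  classical
  ext d
  set k := Dg d + 1 with hk
  set N : Fin n →₀ ℕ := Finsupp.equivFunOnFinite.symm (fun _ => k + 1) with hN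
  set p := MvPowerSeries.trunc K N f with hp
  have hdiff : f - ↑p ∈ idl n K (k + 1) := by
    intro d' hd'
    have hlt : d' < N := by
      have hle : d' ≤ N := by
        intro j'
        have : d' j' ≤ Dg d' := Finset.single_le_sum (f := fun j'' => d' j'')
          (fun _ _ => Nat.zero_le _) (Finset.mem_univ j')
        have hNj : N j' = k + 1 := rfl
        omega
      refine lt_of_le_of_ne hle ?_
      intro hcon
      have : d' j = k + 1 := by rw [hcon]; rfl
      have : d' j ≤ Dg d' := Finset.single_le_sum (f := fun j'' => d' j'')
        (fun _ _ => Nat.zero_le _) (Finset.mem_univ j)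
      omega
    rw [map_sub, MvPolynomial.coeff_coe, MvPowerSeries.coeff_trunc, if_pos hlt, sub_self]
  have hsplit : f = ↑p + (f - ↑p) := by ring
  have hL : coeff d (pderiv j (φ f)) = coeff d (pderiv j (φ ↑p)) := by
    conv_lhs => rw [hsplit]
    rw [map_add, pderiv_add, map_add]
    rw [coeff_mem_idl (pderiv_mem_idl j k (phi_mem_idl φ (k+1) hdiff)) (by omega), add_zero]
  have hR : coeff d (chainAux φ j f) = coeff d (chainAux φ j ↑p) := by
    conv_lhs => rw [hsplit]
    rw [chainAux_add, map_add]
    have hmem : chainAux φ j (f - ↑p) ∈ idl n K k := by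
      refine Ideal.sum_mem _ ?_
      intro i _
      exact Ideal.mul_mem_right _ _ (phi_mem_idl φ k (pderiv_mem_idl i k hdiff))
    rw [coeff_mem_idl hmem (by omega), add_zero]
  rw [hL, hR, chain_poly]

end Aux

open Aux in
lemma jIdeal_le_map {n : ℕ} {K : Type*} [Field K]
    (φ : MvPowerSeries (Fin n) K ≃ₐ[K] MvPowerSeries (Fin n) K) (f : MvPowerSeries (Fin n) K) :
    jIdeal (φ f) ≤ (jIdeal f).map (φ : MvPowerSeries (Fin n) K →+* MvPowerSeries (Fin n) K) := by
  rw [jIdeal, Ideal.span_le]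
  rintro _ ⟨j, rfl⟩
  simp only []
  rw [chain]
  refine Ideal.sum_mem _ ?_
  intro i _
  refine Ideal.mul_mem_right _ _ (Ideal.mem_map_of_mem _ ?_)
  exact Ideal.subset_span ⟨i, rfl⟩


/-- For an automorphism `φ` of `K[[x]]`: `j(φ(f)) = φ(j(f))`, hence `μ` is a right invariant. -/
theorem stmt_11 {n : ℕ} {K : Type*} [Field K]
    (φ : MvPowerSeries (Fin n) K ≃ₐ[K] MvPowerSeries (Fin n) K)
    (f : MvPowerSeries (Fin n) K) :
    jIdeal (φ f) = (jIdeal f).map (φ : MvPowerSeries (Fin n) K →+* MvPowerSeries (Fin n) K) ∧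
    Module.rank K (MvPowerSeries (Fin n) K ⧸ jIdeal (φ f)) =
      Module.rank K (MvPowerSeries (Fin n) K ⧸ jIdeal f) := by
  have h1 := jIdeal_le_map φ f
  have h2 := jIdeal_le_map φ.symm (φ f)
  rw [φ.symm_apply_apply] at h2
  have h3 : (jIdeal f).map (φ : MvPowerSeries (Fin n) K →+* MvPowerSeries (Fin n) K)
      ≤ jIdeal (φ f) := by
    have hm := Ideal.map_mono (f := (φ : MvPowerSeries (Fin n) K →+* MvPowerSeries (Fin n) K)) h2
    rw [Ideal.map_map] at hm
    have hcomp : (φ : MvPowerSeries (Fin n) K →+* MvPowerSeries (Fin n) K).comp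
        (φ.symm : MvPowerSeries (Fin n) K →+* MvPowerSeries (Fin n) K) = RingHom.id _ := by
      ext x; simp
    rw [hcomp, Ideal.map_id] at hm
    exact hm
  have heq := le_antisymm h1 h3
  refine ⟨heq, ?_⟩
  have e := Ideal.quotientEquivAlg (R₁ := K) (jIdeal f) (jIdeal (φ f)) φ heq
  exact (LinearEquiv.rank_eq e.toLinearEquiv).symm
end

section
/- Let K be a field of characteristic p > 0 and f ∈ m² ⊆ K[[x]] a univariate power series with finite Milnor number μ(f). If the order (multiplicity) m = ord(f) is not divisible by p, then f is right equivalent to x^m, and μ(f) = m − 1. -/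
open PowerSeries

namespace Stmt16Aux

variable {K : Type*} [Field K]

noncomputable def subst (g f : K⟦X⟧) : K⟦X⟧ :=
  PowerSeries.mk fun k => ∑ n ∈ Finset.range (k + 1), coeff n f * coeff k (g ^ n)

theorem coeff_subst (g f : K⟦X⟧) (k : ℕ) :
    coeff k (subst g f) = ∑ n ∈ Finset.range (k + 1), coeff n f * coeff k (g ^ n) :=
  coeff_mk _ _

theorem coeff_pow_eq_zero {g : K⟦X⟧} (hg : constantCoeff g = 0) {n k : ℕ} (h : k < n) :
    coeff k (g ^ n) = 0 := by
  have h1 : (X : K⟦X⟧) ^ n ∣ g ^ n := pow_dvd_pow_of_dvd (X_dvd_iff.mpr hg) n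
  exact X_pow_dvd_iff.mp h1 k h

theorem coeff_subst_congr {g f₁ f₂ : K⟦X⟧} {k : ℕ}
    (h : ∀ n ≤ k, coeff n f₁ = coeff n f₂) :
    coeff k (subst g f₁) = coeff k (subst g f₂) := by
  rw [coeff_subst, coeff_subst]
  refine Finset.sum_congr rfl fun n hn => ?_
  rw [h n (Nat.lt_succ_iff.mp (Finset.mem_range.mp hn))]

theorem subst_add (g f₁ f₂ : K⟦X⟧) : subst g (f₁ + f₂) = subst g f₁ + subst g f₂ := by
  ext k
  simp [coeff_subst, add_mul, Finset.sum_add_distrib]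

theorem subst_monomial {g : K⟦X⟧} (hg : constantCoeff g = 0) (i : ℕ) (c : K) :
    subst g (monomial i c) = C c * g ^ i := by
  ext k
  rw [coeff_subst, coeff_C_mul]
  simp only [coeff_monomial, ite_mul, zero_mul]
  rw [Finset.sum_ite_eq' (Finset.range (k + 1)) i fun n => c * coeff k (g ^ n)]
  by_cases h : i ≤ k
  · rw [if_pos (Finset.mem_range.mpr (Nat.lt_succ_of_le h))]
  · rw [if_neg (by simpa using h), coeff_pow_eq_zero hg (by omega), mul_zero]

theorem subst_coe {g : K⟦X⟧} (hg : constantCoeff g = 0) (P : Polynomial K) :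
    subst g (P : K⟦X⟧) = Polynomial.eval₂ C g P := by
  induction P using Polynomial.induction_on' with
  | add p q hp hq => rw [Polynomial.coe_add, subst_add, hp, hq, Polynomial.eval₂_add]
  | monomial n a => rw [Polynomial.coe_monomial, subst_monomial hg, Polynomial.eval₂_monomial]

theorem coeff_mul_congr {a a' b b' : K⟦X⟧} {k : ℕ}
    (ha : ∀ i ≤ k, coeff i a = coeff i a') (hb : ∀ i ≤ k, coeff i b = coeff i b') :
    coeff k (a * b) = coeff k (a' * b') := by
  rw [coeff_mul, coeff_mul]
  refine Finset.sum_congr rfl fun x hx => ?_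
  have := Finset.HasAntidiagonal.mem_antidiagonal.mp hx
  rw [ha x.1 (by omega), hb x.2 (by omega)]

theorem coeff_trunc_coe (f : K⟦X⟧) {n k : ℕ} (h : n ≤ k) :
    coeff n ((trunc (k + 1) f : Polynomial K) : K⟦X⟧) = coeff n f := by
  rw [Polynomial.coeff_coe, coeff_trunc, if_pos (Nat.lt_succ_of_le h)]

theorem subst_mul {g : K⟦X⟧} (hg : constantCoeff g = 0) (f₁ f₂ : K⟦X⟧) :
    subst g (f₁ * f₂) = subst g f₁ * subst g f₂ := by
  ext k
  set P := trunc (k + 1) f₁ with hP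
  set Q := trunc (k + 1) f₂ with hQ
  have h₁ : ∀ n ≤ k, coeff n ((P : K⟦X⟧)) = coeff n f₁ := fun n hn => coeff_trunc_coe f₁ hn
  have h₂ : ∀ n ≤ k, coeff n ((Q : K⟦X⟧)) = coeff n f₂ := fun n hn => coeff_trunc_coe f₂ hn
  calc coeff k (subst g (f₁ * f₂))
      = coeff k (subst g ((P : K⟦X⟧) * (Q : K⟦X⟧))) :=
        (coeff_subst_congr fun n hn => coeff_mul_congr
          (fun i hi => h₁ i (le_trans hi hn)) (fun i hi => h₂ i (le_trans hi hn))).symm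
    _ = coeff k (subst g ((P * Q : Polynomial K) : K⟦X⟧)) := by rw [Polynomial.coe_mul]
    _ = coeff k (subst g (P : K⟦X⟧) * subst g (Q : K⟦X⟧)) := by
        rw [subst_coe hg, Polynomial.eval₂_mul, ← subst_coe hg P, ← subst_coe hg Q]
    _ = coeff k (subst g f₁ * subst g f₂) :=
        coeff_mul_congr (fun i hi => coeff_subst_congr fun n hn => h₁ n (le_trans hn hi))
          (fun i hi => coeff_subst_congr fun n hn => h₂ n (le_trans hn hi))

theorem subst_C {g : K⟦X⟧} (hg : constantCoeff g = 0) (c : K) : subst g (C c) = C c := by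
  have := subst_coe hg (Polynomial.C c)
  rwa [Polynomial.coe_C, Polynomial.eval₂_C] at this

theorem subst_X {g : K⟦X⟧} (hg : constantCoeff g = 0) : subst g X = g := by
  have := subst_coe hg Polynomial.X
  rwa [Polynomial.coe_X, Polynomial.eval₂_X] at this

noncomputable def substAlgHom {g : K⟦X⟧} (hg : constantCoeff g = 0) : K⟦X⟧ →ₐ[K] K⟦X⟧ where
  toFun := subst g
  map_one' := by
    have := subst_C hg 1
    rwa [map_one] at this
  map_mul' := subst_mul hg
  map_zero' := by ext k; simp [coeff_subst]
  map_add' := subst_add g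
  commutes' := fun c => by
    simp only [PowerSeries.algebraMap_apply, Algebra.algebraMap_self, RingHom.id_apply]
    exact subst_C hg c

theorem coeff_pow_self {g : K⟦X⟧} (hg0 : constantCoeff g = 0) (k : ℕ) :
    coeff k (g ^ k) = (coeff 1 g) ^ k := by
  obtain ⟨h, rfl⟩ := X_dvd_iff.mpr hg0
  rw [mul_pow]
  have := coeff_X_pow_mul (h ^ k) k 0
  rw [zero_add] at this
  rw [this, coeff_zero_eq_constantCoeff_apply, map_pow, coeff_succ_X_mul,
    coeff_zero_eq_constantCoeff_apply]

theorem subst_injective {g : K⟦X⟧} (hg0 : constantCoeff g = 0) (hg1 : coeff 1 g ≠ 0) :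
    Function.Injective (subst g) := by
  have key : ∀ f : K⟦X⟧, subst g f = 0 → f = 0 := by
    intro f hf
    ext k
    induction k using Nat.strong_induction_on with
    | _ k ih =>
      have h0 : coeff k (subst g f) = 0 := by rw [hf]; simp
      rw [coeff_subst, Finset.sum_range_succ] at h0
      have hz : ∑ n ∈ Finset.range k, coeff n f * coeff k (g ^ n) = 0 :=
        Finset.sum_eq_zero fun n hn => by
          rw [ih n (Finset.mem_range.mp hn)]; simp
      rw [hz, zero_add, coeff_pow_self hg0] at h0
      simpa using (mul_eq_zero.mp h0).resolve_right (pow_ne_zero k hg1)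
  intro a b hab
  have : subst g (a - b) = 0 := by
    have hsub : subst g (a - b) = subst g a - subst g b := by
      ext k; simp [coeff_subst, sub_mul, Finset.sum_sub_distrib]
    rw [hsub, hab, sub_self]
  exact sub_eq_zero.mp (key _ this)

noncomputable def solveC (g y : K⟦X⟧) : ℕ → K
  | k => (coeff k y - ∑ n ∈ (Finset.range k).attach,
      solveC g y n * coeff k (g ^ (n : ℕ))) / (coeff 1 g) ^ k
  decreasing_by exact Finset.mem_range.mp n.2

theorem subst_surjective {g : K⟦X⟧} (hg0 : constantCoeff g = 0) (hg1 : coeff 1 g ≠ 0) :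
    Function.Surjective (subst g) := by
  intro y
  refine ⟨PowerSeries.mk (solveC g y), ?_⟩
  ext k
  rw [coeff_subst, Finset.sum_range_succ]
  simp only [coeff_mk]
  rw [coeff_pow_self hg0, solveC,
    div_mul_cancel₀ _ (pow_ne_zero k hg1),
    ← Finset.sum_attach (Finset.range k) fun n => solveC g y n * coeff k (g ^ n)]
  ring

noncomputable def substEquiv {g : K⟦X⟧} (hg0 : constantCoeff g = 0) (hg1 : coeff 1 g ≠ 0) :
    K⟦X⟧ ≃ₐ[K] K⟦X⟧ :=
  AlgEquiv.ofBijective (substAlgHom hg0) ⟨subst_injective hg0 hg1, subst_surjective hg0 hg1⟩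

theorem substEquiv_apply {g : K⟦X⟧} (hg0 : constantCoeff g = 0) (hg1 : coeff 1 g ≠ 0)
    (f : K⟦X⟧) : substEquiv hg0 hg1 f = subst g f := rfl


theorem mem_aux (x : K⟦X⟧) (n : ℕ) :
    x ∈ ((Ideal.span {(X : K⟦X⟧)}) ^ n • ⊤ : Ideal K⟦X⟧) ↔ ∀ i < n, coeff i x = 0 := by
  rw [smul_eq_mul, Ideal.mul_top, Ideal.span_singleton_pow, Ideal.mem_span_singleton]
  exact X_pow_dvd_iff

instance : IsAdicComplete (Ideal.span {(X : K⟦X⟧)}) K⟦X⟧ where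
  haus' := fun x hx => by
    ext i
    have := (mem_aux x (i + 1)).mp (SModEq.zero.mp (hx (i + 1)))
    simpa using this i (Nat.lt_succ_self i)
  prec' := fun f hf => by
    refine ⟨PowerSeries.mk fun k => coeff k (f (k + 1)), fun n => ?_⟩
    rw [SModEq.sub_mem, mem_aux]
    intro i hi
    have h := hf (show i + 1 ≤ n from hi)
    have h2 := (mem_aux _ (i + 1)).mp (SModEq.sub_mem.mp h)
    have h3 := h2 i (Nat.lt_succ_self i)
    simp only [map_sub, coeff_mk]
    rw [map_sub, sub_eq_zero] at h3
    rw [sub_eq_zero]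
    exact h3.symm

theorem exists_nth_root [IsAlgClosed K] (p : ℕ) [CharP K p] {m : ℕ} (hm : 0 < m)
    (hpm : ¬ p ∣ m) (u : K⟦X⟧) (hu : constantCoeff u ≠ 0) :
    ∃ v : K⟦X⟧, v ^ m = u ∧ constantCoeff v ≠ 0 := by
  obtain ⟨c, hc⟩ := IsAlgClosed.exists_pow_nat_eq (constantCoeff u) hm
  have hc0 : c ≠ 0 := by
    intro h; rw [h, zero_pow hm.ne'] at hc; exact hu hc.symm
  have hmK : (m : K) ≠ 0 := by
    rw [Ne, CharP.cast_eq_zero_iff K p m]; exact hpm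
  set I : Ideal K⟦X⟧ := Ideal.span {(X : K⟦X⟧)} with hI
  have h₁ : (Polynomial.X ^ m - Polynomial.C u).eval (C c) ∈ I := by
    rw [hI, Ideal.mem_span_singleton, X_dvd_iff]
    simp [← map_pow, hc]
  have h₂ : IsUnit (Ideal.Quotient.mk I
      ((Polynomial.derivative (Polynomial.X ^ m - Polynomial.C u)).eval (C c))) := by
    refine IsUnit.map _ ?_
    rw [isUnit_iff_constantCoeff]
    have heq : (Polynomial.derivative (Polynomial.X ^ m - Polynomial.C u)).eval (C c)
        = (m : K⟦X⟧) * (C c) ^ (m - 1) := by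
      simp [Polynomial.derivative_X_pow]
    rw [heq]
    simp only [map_mul, map_pow, map_natCast, constantCoeff_C]
    exact (mul_ne_zero hmK (pow_ne_zero _ hc0)).isUnit
  obtain ⟨a, ha, -⟩ := HenselianRing.is_henselian (R := K⟦X⟧) (I := I)
    (Polynomial.X ^ m - Polynomial.C u)
    (Polynomial.monic_X_pow_sub_C u hm.ne') (C c) h₁ h₂
  have ham : a ^ m = u := by
    have := ha
    simp only [Polynomial.IsRoot, Polynomial.eval_sub, Polynomial.eval_pow, Polynomial.eval_X,
      Polynomial.eval_C, sub_eq_zero] at this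
    exact this
  refine ⟨a, ham, fun h => ?_⟩
  apply hu
  rw [← ham, map_pow, h, zero_pow hm.ne']

theorem coeff_fin_sum (n : ℕ) (c : Fin n → K) (i : Fin n) :
    coeff i (∑ j : Fin n, C (c j) * X ^ (j : ℕ)) = c i := by
  rw [map_sum]
  simp only [coeff_C_mul, coeff_X_pow]
  rw [Finset.sum_eq_single i]
  · simp
  · intro j _ hj
    rw [if_neg (fun h => hj (Fin.ext h.symm)), mul_zero]
  · simp

theorem finrank_quot_span_X_pow (n : ℕ) :
    Module.finrank K (K⟦X⟧ ⧸ Ideal.span {(X : K⟦X⟧) ^ n}) = n := by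
  set I : Ideal K⟦X⟧ := Ideal.span {(X : K⟦X⟧) ^ n} with hI
  set π : K⟦X⟧ →+* K⟦X⟧ ⧸ I := Ideal.Quotient.mk I with hπ
  have hsmul : ∀ (c : K) (x : K⟦X⟧), π (C c * x) = c • π x := by
    intro c x
    rw [← smul_eq_C_mul]
    exact Submodule.Quotient.mk_smul I c x
  set b : Fin n → K⟦X⟧ ⧸ I := fun i => π (X ^ (i : ℕ)) with hb
  have hmem : ∀ x : K⟦X⟧, x ∈ I ↔ ∀ i < n, coeff i x = 0 := by
    intro x
    rw [hI, Ideal.mem_span_singleton]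
    exact X_pow_dvd_iff
  have hli : LinearIndependent K b := by
    rw [Fintype.linearIndependent_iff]
    intro g hg i
    have hπsum : π (∑ j : Fin n, C (g j) * X ^ (j : ℕ)) = 0 := by
      rw [map_sum]
      rw [← hg]
      exact Finset.sum_congr rfl fun j _ => hsmul (g j) (X ^ (j : ℕ))
    have hmem' := (hmem _).mp (Ideal.Quotient.eq_zero_iff_mem.mp hπsum)
    have := hmem' i i.2
    rwa [coeff_fin_sum] at this
  have hsp : ⊤ ≤ Submodule.span K (Set.range b) := by
    rintro q -
    obtain ⟨f, rfl⟩ := Ideal.Quotient.mk_surjective q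
    have key : π f = ∑ i : Fin n, coeff i f • b i := by
      have h1 : π (f - ∑ i : Fin n, C (coeff i f) * X ^ (i : ℕ)) = 0 := by
        refine Ideal.Quotient.eq_zero_iff_mem.mpr ((hmem _).mpr fun i hi => ?_)
        rw [map_sub, sub_eq_zero]
        exact (coeff_fin_sum n (fun j => coeff (j : ℕ) f) ⟨i, hi⟩).symm
      have h2 : π f = π (∑ i : Fin n, C (coeff i f) * X ^ (i : ℕ)) := by
        rw [← sub_eq_zero, ← map_sub]
        exact h1
      rw [h2, map_sum]
      exact Finset.sum_congr rfl fun i _ => hsmul _ _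
    rw [key]
    exact Submodule.sum_mem _ fun i _ =>
      Submodule.smul_mem _ _ (Submodule.subset_span ⟨i, rfl⟩)
  let B : Module.Basis (Fin n) K (K⟦X⟧ ⧸ I) := Module.Basis.mk hli hsp
  rw [Module.finrank_eq_card_basis B, Fintype.card_fin]
end Stmt16Aux

open Stmt16Aux

/-- If a univariate power series `f` over an algebraically closed field of
characteristic `p > 0` has finite Milnor number and order `m ≥ 2` not divisible
by `p`, then `f` is right equivalent to `x^m` and `μ(f) = m - 1`. -/
theorem stmt_16 {K : Type*} [Field K] [IsAlgClosed K] (p : ℕ) [CharP K p] (hp : 0 < p)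
    (f : PowerSeries K) (m : ℕ) (hm : f.order = m) (hm2 : 2 ≤ m)
    (hfin : FiniteDimensional K (PowerSeries K ⧸ Ideal.span {derivative K f}))
    (hpm : ¬ p ∣ m) :
    (∃ φ : PowerSeries K ≃ₐ[K] PowerSeries K, φ f = PowerSeries.X ^ m) ∧
    Module.finrank K (PowerSeries K ⧸ Ideal.span {derivative K f}) = m - 1 := by
  classical
  have hm0 : 0 < m := by omega
  have hmK : (m : K) ≠ 0 := by rw [Ne, CharP.cast_eq_zero_iff K p m]; exact hpm
  obtain ⟨hcm, hlow⟩ := PowerSeries.order_eq_nat.mp hm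
  obtain ⟨u, hu⟩ : (X : K⟦X⟧) ^ m ∣ f := X_pow_dvd_iff.mpr hlow
  have hu0 : constantCoeff u ≠ 0 := by
    have hc : coeff m f = constantCoeff u := by
      rw [hu]
      have h := coeff_X_pow_mul u m 0
      rw [zero_add] at h
      rw [h, coeff_zero_eq_constantCoeff_apply]
    rwa [hc] at hcm
  obtain ⟨v, hvm, hv0⟩ := exists_nth_root p hm0 hpm u hu0
  have hg0 : constantCoeff ((X : K⟦X⟧) * v) = 0 := by simp
  have hg1 : coeff 1 ((X : K⟦X⟧) * v) ≠ 0 := by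
    rw [show (1 : ℕ) = 0 + 1 from rfl, coeff_succ_X_mul, coeff_zero_eq_constantCoeff_apply]
    exact hv0
  set ψ := substEquiv hg0 hg1 with hψdef
  have hψX : ψ X = (X : K⟦X⟧) * v := subst_X hg0
  have hψ : ψ (X ^ m) = f := by
    rw [map_pow, hψX, mul_pow, hvm, ← hu]
  refine ⟨⟨ψ.symm, by rw [AlgEquiv.symm_apply_eq, hψ]⟩, ?_⟩
  set n := m - 1 with hn
  have hnm : n + 1 = m := by omega
  have hdlow : ∀ k < n, coeff k (derivative K f) = 0 := by
    intro k hk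
    rw [coeff_derivative, hlow (k + 1) (by omega), zero_mul]
  have hdn : coeff n (derivative K f) ≠ 0 := by
    rw [coeff_derivative, hnm]
    refine mul_ne_zero hcm ?_
    have : ((n : K) + 1) = ((m : K)) := by
      rw [← hnm]; push_cast; ring
    rw [this]
    exact hmK
  obtain ⟨w, hw⟩ : (X : K⟦X⟧) ^ n ∣ derivative K f := X_pow_dvd_iff.mpr hdlow
  have hw0 : constantCoeff w ≠ 0 := by
    have hc : coeff n (derivative K f) = constantCoeff w := by
      rw [hw]
      have h := coeff_X_pow_mul w n 0
      rw [zero_add] at h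
      rw [h, coeff_zero_eq_constantCoeff_apply]
    rwa [hc] at hdn
  have hassoc : Associated ((X : K⟦X⟧) ^ n) (derivative K f) := by
    refine ⟨(isUnit_iff_constantCoeff.mpr hw0.isUnit).unit, ?_⟩
    rw [IsUnit.unit_spec, ← hw]
  have hspan : Ideal.span {derivative K f} = Ideal.span {(X : K⟦X⟧) ^ n} :=
    (Ideal.span_singleton_eq_span_singleton.mpr hassoc).symm
  rw [hspan]
  exact finrank_quot_span_X_pow n
end

section
/- Let K be a field of characteristic p > 0 and f = xᵖ + a_{p+1}x^{p+1} + … ∈ K[[x]] a univariate power series of order p whose coefficient sequence begins with xᵖ. For t ∈ K, set f_t = f + t·x^{p+1}. If f_t is right equivalent to f_{t'} then t = t'. -/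
open PowerSeries

/-- For `f = xᵖ + a_{p+1}x^{p+1} + …` in characteristic `p > 0`, the unfoldings
`f_t = f + t·x^{p+1}` are pairwise right inequivalent: `f_t ∼ f_{t'}` implies `t = t'`. -/
theorem stmt_17 {K : Type*} [Field K] (p : ℕ) [CharP K p] (hp : p.Prime)
    (f : PowerSeries K) (h0 : ∀ i < p, PowerSeries.coeff i f = 0)
    (h1 : PowerSeries.coeff p f = 1) (t t' : K)
    (h : ∃ φ : PowerSeries K ≃ₐ[K] PowerSeries K,
      φ (f + PowerSeries.C t * PowerSeries.X ^ (p + 1)) =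
        f + PowerSeries.C t' * PowerSeries.X ^ (p + 1)) :
    t = t' := by
  classical
  obtain ⟨φ, hφ⟩ := h
  haveI : Fact p.Prime := ⟨hp⟩
  haveI : CharP (PowerSeries K) p :=
    charP_of_injective_ringHom (f := PowerSeries.C) PowerSeries.C_injective p
  have hp1 : 1 < p := hp.one_lt
  set F := f + PowerSeries.C t * PowerSeries.X ^ (p + 1) with hFdef
  set F' := f + PowerSeries.C t' * PowerSeries.X ^ (p + 1) with hF'def
  -- basic coefficients of F and F'
  have hcoefflow : ∀ i < p, PowerSeries.coeff i F = 0 := by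
    intro i hi
    simp [hFdef, PowerSeries.coeff_X_pow, Nat.ne_of_lt (lt_trans hi (Nat.lt_succ_self p)),
      h0 i hi]
  have hcoeffp : PowerSeries.coeff p F = 1 := by
    simp [hFdef, PowerSeries.coeff_X_pow, h1, Nat.ne_of_lt (Nat.lt_succ_self p)]
  have hcoeffp1 : PowerSeries.coeff (p + 1) F = PowerSeries.coeff (p + 1) f + t := by
    simp [hFdef, PowerSeries.coeff_X_pow]
  have hcoeffp' : PowerSeries.coeff p F' = 1 := by
    simp [hF'def, PowerSeries.coeff_X_pow, h1, Nat.ne_of_lt (Nat.lt_succ_self p)]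
  have hcoeffp1' : PowerSeries.coeff (p + 1) F' = PowerSeries.coeff (p + 1) f + t' := by
    simp [hF'def, PowerSeries.coeff_X_pow]
  -- X^p divides F
  obtain ⟨g, hg⟩ : (PowerSeries.X : PowerSeries K) ^ p ∣ F :=
    PowerSeries.X_pow_dvd_iff.mpr hcoefflow
  set u : PowerSeries K := φ PowerSeries.X with hu
  -- the constant coefficient of u is 0
  have hu0 : PowerSeries.constantCoeff u = 0 := by
    by_contra h'
    have hunit : IsUnit u :=
      PowerSeries.isUnit_iff_constantCoeff.mpr (isUnit_iff_ne_zero.mpr h')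
    have hXunit : IsUnit (PowerSeries.X : PowerSeries K) := by
      have := hunit.map φ.symm.toAlgHom
      simpa [hu] using this
    rw [PowerSeries.isUnit_iff_constantCoeff] at hXunit
    simp at hXunit
  obtain ⟨w, hw⟩ : (PowerSeries.X : PowerSeries K) ∣ u := PowerSeries.X_dvd_iff.mpr hu0
  -- φ preserves constant coefficients
  have hstconst : ∀ g : PowerSeries K,
      PowerSeries.constantCoeff (φ g) = PowerSeries.constantCoeff g := by
    intro g
    obtain ⟨r, hr⟩ : (PowerSeries.X : PowerSeries K) ∣
        (g - PowerSeries.C (PowerSeries.constantCoeff g)) :=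
      PowerSeries.X_dvd_iff.mpr (by simp)
    have hgeq : g = PowerSeries.C (PowerSeries.constantCoeff g) + PowerSeries.X * r := by
      rw [← hr]; ring
    have : φ g = PowerSeries.C (PowerSeries.constantCoeff g) + u * φ r := by
      conv_lhs => rw [hgeq]
      rw [map_add, map_mul, PowerSeries.C_eq_algebraMap, AlgEquiv.commutes, ← hu,
        ← PowerSeries.C_eq_algebraMap]
    rw [this]
    simp [hu0]
  -- φ scales the degree-1 coefficient by u₁
  have hstone : ∀ g : PowerSeries K,
      PowerSeries.coeff 1 (φ g) = PowerSeries.coeff 1 u * PowerSeries.coeff 1 g := by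
    intro g
    obtain ⟨r, hr⟩ : (PowerSeries.X : PowerSeries K) ^ 2 ∣
        (g - PowerSeries.C (PowerSeries.constantCoeff g)
          - PowerSeries.C (PowerSeries.coeff 1 g) * PowerSeries.X) := by
      rw [PowerSeries.X_pow_dvd_iff]
      intro m hm
      interval_cases m <;> simp
    have hgeq : g = PowerSeries.C (PowerSeries.constantCoeff g)
        + PowerSeries.C (PowerSeries.coeff 1 g) * PowerSeries.X
        + PowerSeries.X ^ 2 * r := by
      rw [← hr]; ring
    have hφg : φ g = PowerSeries.C (PowerSeries.constantCoeff g)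
        + PowerSeries.C (PowerSeries.coeff 1 g) * u + u ^ 2 * φ r := by
      conv_lhs => rw [hgeq]
      simp only [map_add, map_mul, map_pow]
      rw [PowerSeries.C_eq_algebraMap, PowerSeries.C_eq_algebraMap, AlgEquiv.commutes,
        AlgEquiv.commutes, ← hu]
    rw [hφg]
    have hu2 : u ^ 2 = PowerSeries.X ^ 2 * w ^ 2 := by rw [hw]; ring
    simp only [map_add, PowerSeries.coeff_C_mul, hu2, mul_assoc]
    rw [PowerSeries.coeff_X_pow_mul' (w ^ 2 * φ r) 2 1]
    simp [mul_comm]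
  -- rewrite φ F
  have hφF : φ F = PowerSeries.X ^ p * (w ^ p * φ g) := by
    have : φ F = u ^ p * φ g := by rw [hg, map_mul, map_pow, ← hu]
    rw [this, hw]; ring
  -- constant coefficients of g and w
  have hg0 : PowerSeries.constantCoeff g = 1 := by
    have hc := hcoeffp
    rw [hg] at hc
    have h2 : PowerSeries.coeff (0 + p) (PowerSeries.X ^ p * g) = PowerSeries.coeff 0 g :=
      PowerSeries.coeff_X_pow_mul g p 0
    rw [zero_add] at h2
    rw [← PowerSeries.coeff_zero_eq_constantCoeff_apply, ← h2, hc]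
  have hg1 : PowerSeries.coeff 1 g = PowerSeries.coeff (p + 1) f + t := by
    have h2 : PowerSeries.coeff (1 + p) (PowerSeries.X ^ p * g) = PowerSeries.coeff 1 g :=
      PowerSeries.coeff_X_pow_mul g p 1
    rw [← h2, ← hg, ← hcoeffp1, add_comm 1 p]
  -- coefficient p of the equation: (w₀)^p = 1, hence w₀ = 1
  have hwp : (PowerSeries.constantCoeff w) ^ p = 1 := by
    have := congrArg (PowerSeries.coeff p) hφF
    rw [hφ, hcoeffp'] at this
    have h2 : PowerSeries.coeff (0 + p) (PowerSeries.X ^ p * (w ^ p * φ g)) =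
        PowerSeries.coeff 0 (w ^ p * φ g) := PowerSeries.coeff_X_pow_mul _ p 0
    rw [zero_add] at h2
    rw [h2] at this
    rw [PowerSeries.coeff_zero_eq_constantCoeff_apply, map_mul, map_pow, hstconst, hg0,
      mul_one] at this
    exact this.symm
  have hw0 : PowerSeries.constantCoeff w = 1 := by
    have hsub : (PowerSeries.constantCoeff w - 1) ^ p = 0 := by
      rw [sub_pow_char, hwp, one_pow, sub_self]
    have := pow_eq_zero_iff (n := p) (by omega) |>.mp hsub
    exact sub_eq_zero.mp this
  -- coefficient 1 of u equals w₀ = 1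
  have hu1 : PowerSeries.coeff 1 u = 1 := by
    rw [hw]
    have : PowerSeries.coeff (0 + 1) (PowerSeries.X * w) = PowerSeries.coeff 0 w :=
      PowerSeries.coeff_succ_X_mul 0 w
    rw [zero_add] at this
    rw [this, PowerSeries.coeff_zero_eq_constantCoeff_apply, hw0]
  -- coefficient 1 of w^p is 0 (Frobenius kills it)
  have hwp1 : PowerSeries.coeff 1 (w ^ p) = 0 := by
    obtain ⟨r, hr⟩ : (PowerSeries.X : PowerSeries K) ∣
        (w - PowerSeries.C (PowerSeries.constantCoeff w)) :=
      PowerSeries.X_dvd_iff.mpr (by simp)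
    have hweq : w = PowerSeries.C (PowerSeries.constantCoeff w) + PowerSeries.X * r := by
      rw [← hr]; ring
    rw [hweq, add_pow_char, mul_pow, ← map_pow]
    rw [map_add, PowerSeries.coeff_C]
    rw [PowerSeries.coeff_X_pow_mul' (r ^ p) p 1]
    simp [Nat.not_le_of_lt hp1]
  -- constant coefficient of w^p is 1
  have hwp0 : PowerSeries.constantCoeff (w ^ p) = 1 := by
    rw [map_pow, hw0, one_pow]
  -- coefficient p+1 of the equation
  have hkey := congrArg (PowerSeries.coeff (p + 1)) hφF
  rw [hφ, hcoeffp1'] at hkey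
  have h2 : PowerSeries.coeff (1 + p) (PowerSeries.X ^ p * (w ^ p * φ g)) =
      PowerSeries.coeff 1 (w ^ p * φ g) := PowerSeries.coeff_X_pow_mul _ p 1
  rw [add_comm 1 p] at h2
  rw [h2] at hkey
  rw [PowerSeries.coeff_one_mul, hwp1, hwp0, hstone, hu1, hg1] at hkey
  -- conclude
  have : PowerSeries.coeff (p + 1) f + t' =
      (PowerSeries.coeff (p + 1) f + t) := by
    rw [hkey]; ring
  exact (add_right_injective _ this).symm
end
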